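/- (Chernoff tail computation from the randomized load-balancing analysis.) Let c > 0. Let n ≥ 2 and Δ ≥ 1 be integers and t ≥ 1, T ≥ 3 be reals satisfying T ≥ 700·e²·Δ⁷·t and T ≥ 7c·ln n. Let Y_1, …, Y_m, with m = ⌈T/2⌉, be independent random variables on a probability space, each taking values in {0,1} with P(Y_i = 1) ≤ 150t/T for every i. Then P(Y_1 + ⋯ + Y_m > T/7) ≤ e^{−T/7} · Δ^{−T} ≤ n^{−c} · Δ^{−T}. -/

import Mathlib

open MeasureTheory ProbabilityTheory Real

/-- **Chernoff tail computation from the randomized load-balancing analysis.**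
If `T ≥ 700·e²·Δ⁷·t` and `T ≥ 7c·ln n`, and `Y_1, …, Y_{⌈T/2⌉}` are independent
`{0,1}`-valued random variables with `P(Y_i = 1) ≤ 150t/T`, then
`P(∑ Y_i > T/7) ≤ e^{−T/7}·Δ^{−T} ≤ n^{−c}·Δ^{−T}`. -/
theorem chernoff_tail_load_balancing
    (c : ℝ) (hc : 0 < c) (n Δ : ℕ) (hn : 2 ≤ n) (hΔ : 1 ≤ Δ)
    (t T : ℝ) (ht : 1 ≤ t) (hT3 : 3 ≤ T)
    (hT1 : 700 * Real.exp 1 ^ 2 * (Δ : ℝ) ^ (7 : ℕ) * t ≤ T)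
    (hT2 : 7 * c * Real.log n ≤ T)
    {Ω : Type*} [MeasurableSpace Ω] (μ : Measure Ω) [IsProbabilityMeasure μ]
    (Y : Fin ⌈T / 2⌉₊ → Ω → ℝ)
    (hmeas : ∀ i, Measurable (Y i))
    (hindep : iIndepFun Y μ)
    (h01 : ∀ i ω, Y i ω = 0 ∨ Y i ω = 1)
    (hprob : ∀ i, μ {ω | Y i ω = 1} ≤ ENNReal.ofReal (150 * t / T)) :
    μ {ω | T / 7 < ∑ i, Y i ω} ≤
        ENNReal.ofReal (Real.exp (-(T / 7)) * (Δ : ℝ) ^ (-T)) ∧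
    Real.exp (-(T / 7)) * (Δ : ℝ) ^ (-T) ≤ (n : ℝ) ^ (-c) * (Δ : ℝ) ^ (-T) := by
  have hT0 : (0:ℝ) < T := by linarith
  have hΔ1 : (1:ℝ) ≤ (Δ:ℝ) := by exact_mod_cast hΔ
  have hΔ0 : (0:ℝ) < (Δ:ℝ) := by linarith
  set L := Real.log Δ with hLdef
  have hL0 : 0 ≤ L := Real.log_nonneg hΔ1
  set s : ℝ := 2 + 7 * L with hsdef
  have hs0 : (0:ℝ) < s := by simp only [hsdef]; linarith
  set A : ℝ := Real.exp 1 ^ 2 * (Δ:ℝ) ^ (7:ℕ) with hAdef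
  have hD7 : (1:ℝ) ≤ (Δ:ℝ) ^ (7:ℕ) := one_le_pow₀ hΔ1
  have he1 : (1:ℝ) < Real.exp 1 := by
    have := Real.exp_one_gt_d9; linarith
  have hA1 : (1:ℝ) ≤ A := by nlinarith
  have hesA : Real.exp s = A := by
    rw [hsdef, Real.exp_add, hAdef]
    congr 1
    · rw [show (2:ℝ) = ((2:ℕ):ℝ) * 1 by norm_num, Real.exp_nat_mul]
    · rw [show (7:ℝ) * L = ((7:ℕ):ℝ) * L by norm_num, Real.exp_nat_mul,
        Real.exp_log hΔ0]
  have hT6 : (6:ℝ) ≤ T := by nlinarith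
  set p : ℝ := 150 * t / T with hpdef
  have hp0 : 0 ≤ p := by positivity
  -- expectation bound
  have hEY : ∀ i, ∫ ω, Y i ω ∂μ ≤ p := by
    intro i
    have hset : MeasurableSet {ω | Y i ω = 1} := (hmeas i) (measurableSet_singleton 1)
    have hrepr : Y i = Set.indicator {ω | Y i ω = 1} 1 := by
      funext ω
      rcases h01 i ω with h | h <;>
        simp [Set.indicator_apply, Set.mem_setOf_eq, h]
    rw [hrepr, integral_indicator_one hset]
    exact ENNReal.toReal_le_of_le_ofReal hp0 (hprob i)
  have hYint : ∀ i, Integrable (Y i) μ := by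
    intro i
    refine Integrable.mono' (integrable_const (1:ℝ)) (hmeas i).aestronglyMeasurable ?_
    filter_upwards with ω
    rcases h01 i ω with h | h <;> rw [h] <;> norm_num
  -- mgf bound
  set B : ℝ := (Real.exp s - 1) * p with hBdef
  have hB0 : 0 ≤ B := by
    apply mul_nonneg _ hp0
    have : (1:ℝ) ≤ Real.exp s := by
      rw [← Real.exp_zero]; exact Real.exp_le_exp.2 hs0.le
    linarith
  have hmgf : ∀ i, mgf (Y i) μ s ≤ Real.exp B := by
    intro i
    have hid : ∀ ω, Real.exp (s * Y i ω) = 1 + (Real.exp s - 1) * Y i ω := by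
      intro ω; rcases h01 i ω with h | h <;> simp [h]
    have hexp1 : (0:ℝ) ≤ Real.exp s - 1 := by
      have : (1:ℝ) ≤ Real.exp s := by
        rw [← Real.exp_zero]; exact Real.exp_le_exp.2 hs0.le
      linarith
    calc mgf (Y i) μ s = ∫ ω, Real.exp (s * Y i ω) ∂μ := rfl
      _ = ∫ ω, (1 + (Real.exp s - 1) * Y i ω) ∂μ := by
          apply integral_congr_ae; filter_upwards with ω; exact hid ω
      _ = 1 + (Real.exp s - 1) * ∫ ω, Y i ω ∂μ := by
          rw [integral_add (integrable_const 1) ((hYint i).const_mul _),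
            integral_const, integral_const_mul]
          simp
      _ ≤ 1 + (Real.exp s - 1) * p := by
          have := hEY i
          nlinarith
      _ ≤ Real.exp B := by
          have := Real.add_one_le_exp B
          rw [hBdef] at *
          linarith
  -- integrability of exp(s * ∑ Y i)
  have hintsum : Integrable (fun ω => Real.exp (s * ∑ i, Y i ω)) μ := by
    refine Integrable.mono' (integrable_const (Real.exp (s * (⌈T/2⌉₊ : ℝ)))) ?_ ?_
    · exact ((Finset.measurable_sum _ (fun i _ => hmeas i)).const_mul s).exp.aestronglyMeasurable
    · filter_upwards with ω
      rw [Real.norm_eq_abs, abs_of_nonneg (Real.exp_pos _).le]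
      apply Real.exp_le_exp.2
      apply mul_le_mul_of_nonneg_left _ hs0.le
      calc ∑ i, Y i ω ≤ ∑ _i : Fin ⌈T/2⌉₊, (1:ℝ) := by
            apply Finset.sum_le_sum
            intro i _
            rcases h01 i ω with h | h <;> rw [h] <;> norm_num
        _ = (⌈T/2⌉₊ : ℝ) := by simp
  -- Chernoff bound
  have hcher := measure_ge_le_exp_mul_mgf (μ := μ) (X := fun ω => ∑ i, Y i ω)
    (t := s) (T/7) hs0.le hintsum
  have hXeq : (fun ω => ∑ i, Y i ω) = ∑ i, Y i := by
    funext ω; simp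
  have hprod : mgf (fun ω => ∑ i, Y i ω) μ s ≤ Real.exp ((⌈T/2⌉₊ : ℝ) * B) := by
    rw [hXeq, hindep.mgf_sum hmeas Finset.univ]
    calc ∏ i : Fin ⌈T/2⌉₊, mgf (Y i) μ s ≤ ∏ _i : Fin ⌈T/2⌉₊, Real.exp B := by
          apply Finset.prod_le_prod (fun i _ => mgf_nonneg) (fun i _ => hmgf i)
      _ = Real.exp B ^ ⌈T/2⌉₊ := by simp
      _ = Real.exp ((⌈T/2⌉₊ : ℝ) * B) := by rw [Real.exp_nat_mul]
  -- key arithmetic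
  have hm : (⌈T/2⌉₊ : ℝ) ≤ T/2 + 1 := (Nat.ceil_lt_add_one (by positivity)).le
  have hT1' : 700 * A * t ≤ T := by
    calc 700 * A * t = 700 * Real.exp 1 ^ 2 * (Δ:ℝ) ^ (7:ℕ) * t := by rw [hAdef]; ring
      _ ≤ T := hT1
  have hmB : (⌈T/2⌉₊ : ℝ) * B ≤ T / 7 := by
    have hBA : B ≤ A * p := by
      rw [hBdef, ← hesA]
      nlinarith
    have h1 : (⌈T/2⌉₊ : ℝ) * B ≤ (T/2 + 1) * (A * p) := by
      apply mul_le_mul hm hBA hB0 (by linarith)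
    have h2 : (T/2 + 1) * (A * p) = 75 * A * t + 150 * A * t / T := by
      rw [hpdef]; field_simp; ring
    have h3 : 75 * A * t ≤ 3 * T / 28 := by linarith
    have h4 : 150 * A * t / T ≤ 3 / 14 := by
      rw [div_le_iff₀ hT0]; linarith
    linarith
  have hDrpow : (Δ:ℝ) ^ (-T) = Real.exp (-(T * L)) := by
    rw [Real.rpow_def_of_pos hΔ0, hLdef]; ring_nf
  have hfinal : Real.exp (-s * (T/7)) * Real.exp ((⌈T/2⌉₊ : ℝ) * B)
      ≤ Real.exp (-(T/7)) * (Δ:ℝ) ^ (-T) := by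
    rw [hDrpow, ← Real.exp_add, ← Real.exp_add]
    apply Real.exp_le_exp.2
    have hexpand : -s * (T/7) = -2 * (T/7) - L * T := by rw [hsdef]; ring
    have hLT : L * T = T * L := by ring
    linarith [hmB]
  constructor
  · have hsub : μ {ω | T / 7 < ∑ i, Y i ω} ≤ μ {ω | T / 7 ≤ ∑ i, Y i ω} :=
      measure_mono (fun ω (h : T / 7 < _) => le_of_lt h)
    refine hsub.trans ?_
    rw [← ENNReal.ofReal_toReal (measure_ne_top μ _)]
    apply ENNReal.ofReal_le_ofReal
    calc (μ {ω | T / 7 ≤ ∑ i, Y i ω}).toReal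
        ≤ Real.exp (-s * (T/7)) * mgf (fun ω => ∑ i, Y i ω) μ s := hcher
      _ ≤ Real.exp (-s * (T/7)) * Real.exp ((⌈T/2⌉₊ : ℝ) * B) := by
          apply mul_le_mul_of_nonneg_left hprod (Real.exp_pos _).le
      _ ≤ Real.exp (-(T/7)) * (Δ:ℝ) ^ (-T) := hfinal
  · apply mul_le_mul_of_nonneg_right _ (Real.rpow_nonneg hΔ0.le _)
    have hn0 : (0:ℝ) < (n:ℝ) := by positivity
    rw [Real.rpow_def_of_pos hn0]
    apply Real.exp_le_exp.2
    linarith
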